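/- Let p ≥ 1, let M be a symmetric positive definite p×p real matrix with smallest eigenvalue λ_min(M), let β₀ ∈ ℝ^p, and let ρ be a real number with 0 ≤ ρ ≤ λ_min(M). Then β₀ is the unique global minimizer over ℝ^p of the function β ↦ √((β − β₀)ᵀM(β − β₀)) + √(ρ(‖β‖² + 1)); that is, for every β ≠ β₀ the value of this function strictly exceeds its value √(ρ(‖β₀‖² + 1)) at β₀. -/

import Mathlib

open Matrix

lemma aux_quad_lower (p : ℕ) (M : Matrix (Fin p) (Fin p) ℝ) (hM : M.PosDef)
    (ρ : ℝ) (hρ : ∀ i, ρ ≤ hM.1.eigenvalues i) (v : Fin p → ℝ) :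
    ρ * (v ⬝ᵥ v) ≤ v ⬝ᵥ (M *ᵥ v) := by
  classical
  set U : Matrix (Fin p) (Fin p) ℝ := (hM.1.eigenvectorUnitary : Matrix (Fin p) (Fin p) ℝ)
  have hpsd : (M - ρ • 1).PosSemidef := by
    have h1 : M - ρ • (1 : Matrix (Fin p) (Fin p) ℝ) =
        U * diagonal (fun i => hM.1.eigenvalues i - ρ) * star U := by
      have hspec := hM.1.spectral_theorem
      have hUU : U * star U = 1 :=
        (Matrix.mem_unitaryGroup_iff).mp hM.1.eigenvectorUnitary.2
      have hsmul : ρ • (1 : Matrix (Fin p) (Fin p) ℝ) =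
          U * diagonal (fun _ => ρ) * star U := by
        rw [smul_one_eq_diagonal]
        calc (diagonal fun _ => ρ) = U * star U * diagonal (fun _ => ρ) := by
              rw [hUU, one_mul]
          _ = U * diagonal (fun _ => ρ) * star U := by
              rw [mul_assoc, mul_assoc]
              congr 1
              ext i j
              simp [Matrix.mul_apply, Matrix.diagonal_apply, mul_comm]
        
      calc M - ρ • (1 : Matrix (Fin p) (Fin p) ℝ)
          = U * diagonal (RCLike.ofReal ∘ hM.1.eigenvalues) * star U -
            U * diagonal (fun _ => ρ) * star U := by
              rw [Unitary.conjStarAlgAut_apply] at hspec; rw [← hspec, ← hsmul]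
        _ = U * (diagonal (RCLike.ofReal ∘ hM.1.eigenvalues) - diagonal (fun _ => ρ)) * star U := by
            rw [Matrix.mul_sub, Matrix.sub_mul]
        _ = U * diagonal (fun i => hM.1.eigenvalues i - ρ) * star U := by
            rw [diagonal_sub]
            norm_num [Function.comp]
    rw [h1]
    apply Matrix.PosSemidef.mul_mul_conjTranspose_same
    refine posSemidef_diagonal_iff.mpr fun i => ?_
    simpa using sub_nonneg.mpr (hρ i)
  have := hpsd.dotProduct_mulVec_nonneg v
  simp only [star_trivial, sub_mulVec, dotProduct_sub, smul_mulVec, one_mulVec,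
    dotProduct_smul, smul_eq_mul] at this
  linarith

/-- If `M` is symmetric positive definite and `0 ≤ ρ ≤ λ_min(M)`, then `β₀`
is the unique global minimizer of `β ↦ √((β−β₀)ᵀM(β−β₀)) + √(ρ(‖β‖²+1))`. -/
theorem stmt_4 (p : ℕ) (hp : 1 ≤ p) (M : Matrix (Fin p) (Fin p) ℝ)
    (hM : M.PosDef) (β₀ : Fin p → ℝ) (ρ : ℝ) (h0 : 0 ≤ ρ)
    (hρ : ρ ≤ ⨅ i, hM.1.eigenvalues i) :
    ∀ β : Fin p → ℝ, β ≠ β₀ →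
      Real.sqrt (ρ * ((∑ i, β₀ i ^ 2) + 1)) <
        Real.sqrt ((β - β₀) ⬝ᵥ (M *ᵥ (β - β₀))) +
          Real.sqrt (ρ * ((∑ i, β i ^ 2) + 1)) := by
  intro β hβ
  have hρ' : ∀ i, ρ ≤ hM.1.eigenvalues i := fun i =>
    hρ.trans (ciInf_le (Finite.bddBelow_range _) i)
  set v : Fin p → ℝ := β - β₀ with hv
  have hv0 : v ≠ 0 := sub_ne_zero.mpr hβ
  -- squared norm of v is positive
  have hvsq : 0 < ∑ i, v i ^ 2 := by
    obtain ⟨i, hi⟩ := Function.ne_iff.mp hv0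
    refine Finset.sum_pos' (fun j _ => sq_nonneg _) ⟨i, Finset.mem_univ i, ?_⟩
    exact (sq_nonneg (v i)).lt_of_ne (Ne.symm (pow_ne_zero 2 hi))
  have hdot : v ⬝ᵥ v = ∑ i, v i ^ 2 := by
    simp [dotProduct, sq]
  have hquad : ρ * (∑ i, v i ^ 2) ≤ v ⬝ᵥ (M *ᵥ v) := by
    rw [← hdot]; exact aux_quad_lower p M hM ρ hρ' v
  set nv : ℝ := Real.sqrt (∑ i, v i ^ 2) with hnv
  have hnvpos : 0 < nv := Real.sqrt_pos.mpr hvsq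
  have hsqrtquad : Real.sqrt ρ * nv ≤ Real.sqrt (v ⬝ᵥ (M *ᵥ v)) := by
    rw [hnv, ← Real.sqrt_mul h0]
    exact Real.sqrt_le_sqrt hquad
  rcases eq_or_lt_of_le h0 with h0' | h0'
  · -- ρ = 0
    have hMv : 0 < v ⬝ᵥ (M *ᵥ v) := by
      have := hM.dotProduct_mulVec_pos hv0
      simpa using this
    rw [← h0']
    simpa using Real.sqrt_pos.mpr hMv
  · -- ρ > 0
    have key : Real.sqrt (ρ * ((∑ i, β₀ i ^ 2) + 1)) <
        Real.sqrt ρ * nv + Real.sqrt (ρ * ((∑ i, β i ^ 2) + 1)) := by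
      rw [Real.sqrt_mul h0, Real.sqrt_mul h0, ← mul_add]
      have hsρ : 0 < Real.sqrt ρ := Real.sqrt_pos.mpr h0'
      refine (mul_lt_mul_iff_right₀ hsρ).mpr ?_
      -- need: √(∑β₀²+1) < nv + √(∑β²+1)
      have hb : 0 ≤ (∑ i, β i ^ 2) + 1 := by positivity
      have hb0 : 0 ≤ (∑ i, β₀ i ^ 2) + 1 := by positivity
      have hrhs : 0 < nv + Real.sqrt ((∑ i, β i ^ 2) + 1) :=
        add_pos_of_pos_of_nonneg hnvpos (Real.sqrt_nonneg _)
      rw [Real.sqrt_lt' hrhs]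
      have hexp : ((∑ i, β₀ i ^ 2) + 1) =
          (∑ i, β i ^ 2) + 1 + (∑ i, v i ^ 2) - 2 * ∑ i, β i * v i := by
        have : ∀ i, β₀ i = β i - v i := fun i => by simp [hv]
        simp only [this]
        have hsum : ∑ x, (β x - v x) ^ 2 =
            ∑ x, (β x ^ 2 + v x ^ 2 - 2 * (β x * v x)) :=
          Finset.sum_congr rfl fun i _ => by ring
        rw [hsum, Finset.sum_sub_distrib, Finset.sum_add_distrib, ← Finset.mul_sum]
        ring
      -- Cauchy–Schwarz : ∑ β (-v) ≤ √(∑β²) √(∑v²) < √(∑β²+1) nv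
      have hCS : (∑ i, β i * (-v i)) ≤ Real.sqrt (∑ i, β i ^ 2) * nv := by
        have h1 := Finset.sum_mul_sq_le_sq_mul_sq Finset.univ β (fun i => -v i)
        have h2 : (∑ i, β i * (-v i)) ≤
            Real.sqrt ((∑ i, β i ^ 2) * ∑ i, (-v i) ^ 2) := by
          calc (∑ i, β i * (-v i)) ≤ |∑ i, β i * (-v i)| := le_abs_self _
            _ = Real.sqrt ((∑ i, β i * (-v i)) ^ 2) := (Real.sqrt_sq_eq_abs _).symm
            _ ≤ Real.sqrt ((∑ i, β i ^ 2) * ∑ i, (-v i) ^ 2) := Real.sqrt_le_sqrt h1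
        calc (∑ i, β i * (-v i)) ≤ Real.sqrt ((∑ i, β i ^ 2) * ∑ i, (-v i) ^ 2) := h2
          _ = Real.sqrt (∑ i, β i ^ 2) * nv := by
              rw [Real.sqrt_mul (by positivity)]
              congr 1
              · rw [hnv]; congr 1; exact Finset.sum_congr rfl fun i _ => by ring
      have hlt : Real.sqrt (∑ i, β i ^ 2) < Real.sqrt ((∑ i, β i ^ 2) + 1) := by
        apply Real.sqrt_lt_sqrt (by positivity); linarith
      have hfinal : (∑ i, β i * (-v i)) < Real.sqrt ((∑ i, β i ^ 2) + 1) * nv :=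
        hCS.trans_lt (by exact mul_lt_mul_of_pos_right hlt hnvpos)
      have hsq : (nv + Real.sqrt ((∑ i, β i ^ 2) + 1)) ^ 2 =
          (∑ i, v i ^ 2) + 2 * nv * Real.sqrt ((∑ i, β i ^ 2) + 1) + ((∑ i, β i ^ 2) + 1) := by
        rw [add_sq, hnv, Real.sq_sqrt hvsq.le, Real.sq_sqrt hb]
      rw [hsq, hexp]
      have : -(∑ i, β i * v i) = ∑ i, β i * (-v i) := by
        rw [← Finset.sum_neg_distrib]; exact Finset.sum_congr rfl fun i _ => by ring
      nlinarith [hfinal]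
    calc Real.sqrt (ρ * ((∑ i, β₀ i ^ 2) + 1))
        < Real.sqrt ρ * nv + Real.sqrt (ρ * ((∑ i, β i ^ 2) + 1)) := key
      _ ≤ Real.sqrt ((β - β₀) ⬝ᵥ (M *ᵥ (β - β₀))) + Real.sqrt (ρ * ((∑ i, β i ^ 2) + 1)) := by
          exact add_le_add_left hsqrtquad _
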